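/- Let X be the smooth vector field on ℝ² given by X(x,y) = ((2 + 3xy²)x, −(1 + 2xy²)y), and let S be the linear vector field S(x,y) = (2x, −y) (the semisimple linear part of X). Then there exists a smooth nowhere-vanishing function ρ on a neighborhood of the origin with ρ(0,0) = 1 such that the 2-form ω₁ = ρ·dx∧dy satisfies L_X ω₁ = ω₁ near the origin, while L_S ω₁ ≠ ω₁ on every neighborhood of the origin. Consequently, in the smooth category a vector field in Poincaré–Dulac normal form can conformally preserve a symplectic form that its semisimple part does not conformally preserve. -/

import Mathlib

open scoped Topology

open Polynomial in
lemma hasDerivAt_E (x : ℝ) : HasDerivAt expNegInvGlue (x⁻¹ ^ 2 * expNegInvGlue x) x := by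
  simpa using expNegInvGlue.hasDerivAt_polynomial_eval_inv_mul 1 x

lemma key_E (x : ℝ) : x⁻¹ ^ 2 * expNegInvGlue x * x ^ 2 = expNegInvGlue x := by
  rcases eq_or_ne x 0 with rfl | h
  · simp [expNegInvGlue.zero]
  · field_simp

noncomputable def myRho (p : ℝ × ℝ) : ℝ := 1 + p.1 ^ 2 * p.2 ^ 3 * expNegInvGlue (p.1 * p.2 ^ 2)

lemma contDiff_rho : ContDiff ℝ (⊤ : ℕ∞) myRho := by
  unfold myRho
  exact contDiff_const.add (((contDiff_fst.pow 2).mul (contDiff_snd.pow 3)).mul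
    (expNegInvGlue.contDiff.comp (contDiff_fst.mul (contDiff_snd.pow 2))))

lemma hasFDerivAt_u (p : ℝ × ℝ) : HasFDerivAt (fun q : ℝ × ℝ => q.1 * q.2 ^ 2)
    (p.2 ^ 2 • ContinuousLinearMap.fst ℝ ℝ ℝ
      + (2 * p.1 * p.2) • ContinuousLinearMap.snd ℝ ℝ ℝ) p := by
  have h : (fun q : ℝ × ℝ => q.1 * q.2 ^ 2) = fun q : ℝ × ℝ => q.1 * (q.2 * q.2) := by
    funext q; ring
  rw [h]
  have := (hasFDerivAt_fst (𝕜 := ℝ) (p := p)).mul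
    ((hasFDerivAt_snd (𝕜 := ℝ) (p := p)).mul (hasFDerivAt_snd (𝕜 := ℝ) (p := p)))
  refine this.congr_fderiv ?_
  refine ContinuousLinearMap.ext fun v => ?_
  simp
  ring

lemma hasFDerivAt_g (p : ℝ × ℝ) : HasFDerivAt (fun q : ℝ × ℝ => q.1 ^ 2 * q.2 ^ 3)
    ((2 * p.1 * p.2 ^ 3) • ContinuousLinearMap.fst ℝ ℝ ℝ
      + (3 * p.1 ^ 2 * p.2 ^ 2) • ContinuousLinearMap.snd ℝ ℝ ℝ) p := by
  have h : (fun q : ℝ × ℝ => q.1 ^ 2 * q.2 ^ 3)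
      = fun q : ℝ × ℝ => (q.1 * q.1) * (q.2 * (q.2 * q.2)) := by
    funext q; ring
  rw [h]
  have := ((hasFDerivAt_fst (𝕜 := ℝ) (p := p)).mul (hasFDerivAt_fst (𝕜 := ℝ) (p := p))).mul
    ((hasFDerivAt_snd (𝕜 := ℝ) (p := p)).mul
      ((hasFDerivAt_snd (𝕜 := ℝ) (p := p)).mul (hasFDerivAt_snd (𝕜 := ℝ) (p := p))))
  refine this.congr_fderiv ?_
  refine ContinuousLinearMap.ext fun v => ?_
  simp
  ring

lemma hasFDerivAt_rho (p : ℝ × ℝ) : HasFDerivAt myRho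
    ((expNegInvGlue (p.1 * p.2 ^ 2)) • ((2 * p.1 * p.2 ^ 3) • ContinuousLinearMap.fst ℝ ℝ ℝ
        + (3 * p.1 ^ 2 * p.2 ^ 2) • ContinuousLinearMap.snd ℝ ℝ ℝ)
     + (p.1 ^ 2 * p.2 ^ 3 * ((p.1 * p.2 ^ 2)⁻¹ ^ 2 * expNegInvGlue (p.1 * p.2 ^ 2))) •
        (p.2 ^ 2 • ContinuousLinearMap.fst ℝ ℝ ℝ
          + (2 * p.1 * p.2) • ContinuousLinearMap.snd ℝ ℝ ℝ)) p := by
  have hEu : HasFDerivAt (fun q : ℝ × ℝ => expNegInvGlue (q.1 * q.2 ^ 2))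
      (((p.1 * p.2 ^ 2)⁻¹ ^ 2 * expNegInvGlue (p.1 * p.2 ^ 2)) •
        (p.2 ^ 2 • ContinuousLinearMap.fst ℝ ℝ ℝ
          + (2 * p.1 * p.2) • ContinuousLinearMap.snd ℝ ℝ ℝ)) p :=
    by have := (hasDerivAt_E (p.1 * p.2 ^ 2)).comp_hasFDerivAt p (hasFDerivAt_u p); exact this
  have := ((hasFDerivAt_g p).mul hEu).const_add 1
  refine this.congr_fderiv ?_
  refine ContinuousLinearMap.ext fun v => ?_
  simp
  ring

lemma fderiv_rho (p : ℝ × ℝ) (v : ℝ × ℝ) :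
    fderiv ℝ myRho p v =
      expNegInvGlue (p.1 * p.2 ^ 2) * (2 * p.1 * p.2 ^ 3 * v.1 + 3 * p.1 ^ 2 * p.2 ^ 2 * v.2)
      + p.1 ^ 2 * p.2 ^ 3 * ((p.1 * p.2 ^ 2)⁻¹ ^ 2 * expNegInvGlue (p.1 * p.2 ^ 2))
          * (p.2 ^ 2 * v.1 + 2 * p.1 * p.2 * v.2) := by
  rw [(hasFDerivAt_rho p).fderiv]
  simp
  ring

lemma fderiv_X1 (p : ℝ × ℝ) :
    fderiv ℝ (fun q : ℝ × ℝ => (2 + 3 * q.1 * q.2 ^ 2) * q.1) p (1, 0)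
      = 2 + 6 * p.1 * p.2 ^ 2 := by
  have h : (fun q : ℝ × ℝ => (2 + 3 * q.1 * q.2 ^ 2) * q.1)
      = fun q : ℝ × ℝ => 2 * q.1 + 3 * ((q.1 * q.1) * (q.2 * q.2)) := by
    funext q; ring
  rw [h]
  have := ((hasFDerivAt_fst (𝕜 := ℝ) (p := p)).const_mul 2).add
    ((((hasFDerivAt_fst (𝕜 := ℝ) (p := p)).mul (hasFDerivAt_fst (𝕜 := ℝ) (p := p))).mul
      ((hasFDerivAt_snd (𝕜 := ℝ) (p := p)).mul (hasFDerivAt_snd (𝕜 := ℝ) (p := p)))).const_mul 3)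
  rw [HasFDerivAt.fderiv (f := fun q : ℝ × ℝ => 2 * q.1 + 3 * ((q.1 * q.1) * (q.2 * q.2))) this]
  simp
  ring

lemma fderiv_X2 (p : ℝ × ℝ) :
    fderiv ℝ (fun q : ℝ × ℝ => -(1 + 2 * q.1 * q.2 ^ 2) * q.2) p (0, 1)
      = -1 - 6 * p.1 * p.2 ^ 2 := by
  have h : (fun q : ℝ × ℝ => -(1 + 2 * q.1 * q.2 ^ 2) * q.2)
      = fun q : ℝ × ℝ => (-1) * q.2 + (-2) * (q.1 * (q.2 * (q.2 * q.2))) := by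
    funext q; ring
  rw [h]
  have := ((hasFDerivAt_snd (𝕜 := ℝ) (p := p)).const_mul (-1)).add
    (((hasFDerivAt_fst (𝕜 := ℝ) (p := p)).mul
      ((hasFDerivAt_snd (𝕜 := ℝ) (p := p)).mul
        ((hasFDerivAt_snd (𝕜 := ℝ) (p := p)).mul
          (hasFDerivAt_snd (𝕜 := ℝ) (p := p))))).const_mul (-2))
  rw [HasFDerivAt.fderiv (f := fun q : ℝ × ℝ => (-1) * q.2 + (-2) * (q.1 * (q.2 * (q.2 * q.2)))) this]
  simp
  ring

lemma fderiv_S1 (p : ℝ × ℝ) :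
    fderiv ℝ (fun q : ℝ × ℝ => 2 * q.1) p (1, 0) = 2 := by
  rw [((hasFDerivAt_fst (𝕜 := ℝ) (p := p)).const_mul 2).fderiv]
  simp

lemma fderiv_S2 (p : ℝ × ℝ) :
    fderiv ℝ (fun q : ℝ × ℝ => -q.2) p (0, 1) = -1 := by
  rw [HasFDerivAt.fderiv (f := fun q : ℝ × ℝ => -q.2) (hasFDerivAt_snd (𝕜 := ℝ) (p := p)).neg]
  simp


/-- (Example of Section 2.4: failure of the conservation law in the smooth
category.) For the vector field `X(x,y) = ((2+3xy²)x, −(1+2xy²)y)` on `ℝ²`, in Poincaré–Dulac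
normal form with semisimple linear part `S(x,y) = (2x, −y)`, there is a smooth nowhere-vanishing
function `ρ` near the origin with `ρ(0,0) = 1` such that `ω₁ = ρ·dx∧dy` satisfies
`L_X ω₁ = ω₁` near the origin while `L_S ω₁ ≠ ω₁` on every neighborhood of the origin.
Here, for `ω = ρ dx∧dy` on `ℝ²`, `L_X ω = (X(ρ) + ρ·div X)·dx∧dy`, and the divergence is
written out via partial derivatives of the components. -/
theorem smooth_counterexample_conservation_law :
    ∃ (ρ : ℝ × ℝ → ℝ) (U : Set (ℝ × ℝ)), IsOpen U ∧ ((0:ℝ), (0:ℝ)) ∈ U ∧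
      ContDiffOn ℝ (⊤ : ℕ∞) ρ U ∧
      (∀ p ∈ U, ρ p ≠ 0) ∧
      ρ ((0:ℝ), (0:ℝ)) = 1 ∧
      -- L_X ω₁ = ω₁ on U, i.e.  X(ρ) + ρ · div X = ρ :
      (∀ p ∈ U,
        fderiv ℝ ρ p ((2 + 3 * p.1 * p.2 ^ 2) * p.1, -(1 + 2 * p.1 * p.2 ^ 2) * p.2)
          + ρ p * (fderiv ℝ (fun q : ℝ × ℝ => (2 + 3 * q.1 * q.2 ^ 2) * q.1) p (1, 0)
                  + fderiv ℝ (fun q : ℝ × ℝ => -(1 + 2 * q.1 * q.2 ^ 2) * q.2) p (0, 1))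
          = ρ p) ∧
      -- L_S ω₁ ≠ ω₁ on every neighborhood of the origin, i.e.  S(ρ) + ρ · div S ≠ ρ somewhere :
      (∀ V ∈ nhds ((0:ℝ), (0:ℝ)), ∃ p ∈ V,
        fderiv ℝ ρ p (2 * p.1, -p.2)
          + ρ p * (fderiv ℝ (fun q : ℝ × ℝ => 2 * q.1) p (1, 0)
                  + fderiv ℝ (fun q : ℝ × ℝ => -q.2) p (0, 1))
          ≠ ρ p) := by
  refine ⟨myRho, {p | 0 < myRho p}, ?_, ?_, ?_, ?_, ?_, ?_, ?_⟩
  · exact isOpen_lt continuous_const contDiff_rho.continuous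
  · simp [myRho, expNegInvGlue.zero]
  · exact contDiff_rho.contDiffOn
  · exact fun p hp => ne_of_gt (show (0:ℝ) < myRho p from hp)
  · simp [myRho, expNegInvGlue.zero]
  · intro p _
    rw [fderiv_rho, fderiv_X1, fderiv_X2]
    have key := key_E (p.1 * p.2 ^ 2)
    simp only []
    linear_combination (-(p.1 ^ 2 * p.2 ^ 3)) * key
  · intro V hV
    rcases Metric.mem_nhds_iff.mp hV with ⟨ε, hε, hball⟩
    refine ⟨(ε/2, ε/2), hball ?_, ?_⟩
    · rw [Metric.mem_ball]
      rw [Prod.dist_eq]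
      simp [Real.dist_eq, abs_div, abs_of_pos hε]
      linarith
    · rw [fderiv_rho, fderiv_S1, fderiv_S2]
      have hE : 0 < expNegInvGlue ((ε/2) * (ε/2) ^ 2) :=
        expNegInvGlue.pos_of_pos (by positivity)
      intro h
      have h5 : (0:ℝ) < (ε/2)^5 * expNegInvGlue ((ε/2) * (ε/2) ^ 2) := by positivity
      simp only [] at h
      nlinarith [h, h5]
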